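/- Fix a client i, a parameter index l, and the cluster index j with l ∈ S_j, and define the per-parameter error ε_{i,l} = w_{FedAvg,l} − w^{global}_{i,l}. If the parameters across clients satisfy |w_{i',l} − w_{i'',l}| ≤ B for all pairs of clients i', i'', and the centroids satisfy |c_{i',j}| ≤ C for all clients i', then |ε_{i,l}| ≤ B + 2C·((n − 1)/n). -/
import Mathlib


/-- |ε_{i,l}| ≤ B + 2C·((n − 1)/n). -/
theorem total_error_bound
    (n r Noc : ℕ) (hn : 1 ≤ n)
    (w : Fin n → Fin r → ℝ)
    (S : Fin Noc → Finset (Fin r))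
    (hS_nonempty : ∀ j, (S j).Nonempty)
    (hS_disjoint : ∀ j j', j ≠ j' → Disjoint (S j) (S j'))
    (hS_cover : ∀ l, ∃ j, l ∈ S j)
    (c : Fin n → Fin Noc → ℝ)
    (hc : ∀ i j, c i j = (∑ l ∈ S j, w i l) / (S j).card)
    (cavg : Fin Noc → ℝ)
    (hcavg : ∀ j, cavg j = (∑ i, c i j) / n)
    (wglob : Fin n → Fin r → ℝ)
    (hwglob : ∀ i (l : Fin r) (j : Fin Noc), l ∈ S j →
      wglob i l = w i l + (cavg j - c i j))
    (wfed : Fin r → ℝ)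
    (hwfed : ∀ l, wfed l = (∑ i, w i l) / n)
    (i : Fin n) (l : Fin r) (j : Fin Noc) (hl : l ∈ S j)
    (B C : ℝ) (hB : 0 ≤ B) (hC : 0 ≤ C)
    (hwbound : ∀ i' i'' : Fin n, |w i' l - w i'' l| ≤ B)
    (hcbound : ∀ i' : Fin n, |c i' j| ≤ C) :
    |wfed l - wglob i l| ≤ B + 2 * C * (((n : ℝ) - 1) / n) := by
  have hn0 : (0:ℝ) < n := by exact_mod_cast hn
  have key : wfed l - wglob i l =
      (∑ i', (w i' l - w i l)) / n - (∑ i', (c i' j - c i j)) / n := by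
    rw [hwfed, hwglob i l j hl, hcavg]
    rw [Finset.sum_sub_distrib, Finset.sum_sub_distrib]
    simp [Finset.sum_const, Finset.card_univ]
    field_simp
    ring
  rw [key]
  have h1 : |(∑ i', (w i' l - w i l)) / n| ≤ B := by
    rw [abs_div, abs_of_pos hn0, div_le_iff₀ hn0]
    calc |∑ i', (w i' l - w i l)| ≤ ∑ i', |w i' l - w i l| :=
          Finset.abs_sum_le_sum_abs _ _
      _ ≤ ∑ _i' : Fin n, B := Finset.sum_le_sum (fun i' _ => hwbound i' i)
      _ = B * n := by simp [mul_comm]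
  have h2 : |(∑ i', (c i' j - c i j)) / n| ≤ 2 * C * (((n : ℝ) - 1) / n) := by
    rw [abs_div, abs_of_pos hn0]
    rw [div_le_iff₀ hn0]
    have : 2 * C * (((n : ℝ) - 1) / n) * n = 2 * C * ((n:ℝ) - 1) := by
      field_simp
    rw [this]
    have hsum : ∑ i', (c i' j - c i j) = ∑ i' ∈ Finset.univ.erase i, (c i' j - c i j) := by
      rw [← Finset.add_sum_erase _ _ (Finset.mem_univ i)]
      simp
    rw [hsum]
    calc |∑ i' ∈ Finset.univ.erase i, (c i' j - c i j)|
        ≤ ∑ i' ∈ Finset.univ.erase i, |c i' j - c i j| := Finset.abs_sum_le_sum_abs _ _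
      _ ≤ ∑ _i' ∈ Finset.univ.erase i, (2 * C) := by
          refine Finset.sum_le_sum (fun i' _ => ?_)
          calc |c i' j - c i j| ≤ |c i' j| + |c i j| := abs_sub _ _
            _ ≤ C + C := add_le_add (hcbound i') (hcbound i)
            _ = 2 * C := by ring
      _ = ((Finset.univ.erase i).card : ℝ) * (2 * C) := by
          simp [Finset.sum_const, mul_comm]
      _ = 2 * C * ((n:ℝ) - 1) := by
          rw [Finset.card_erase_of_mem (Finset.mem_univ i), Finset.card_univ]
          simp
          rw [Nat.cast_sub hn]
          ring
  calc |(∑ i', (w i' l - w i l)) / n - (∑ i', (c i' j - c i j)) / n|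
      ≤ |(∑ i', (w i' l - w i l)) / n| + |(∑ i', (c i' j - c i j)) / n| := abs_sub _ _
    _ ≤ B + 2 * C * (((n : ℝ) - 1) / n) := add_le_add h1 h2
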